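/- For every n ≥ 1, the complete graph K_n admits a path decomposition into at most ⌊(n+1)/2⌋ paths. -/

import Mathlib

open SimpleGraph

/-- A path decomposition of `G`: a list of paths such that every edge of `G`
lies in exactly one of them. -/
def IsPathDecomp {V : Type*} (G : SimpleGraph V)
    (P : List (Σ u v : V, G.Walk u v)) : Prop :=
  (∀ p ∈ P, p.2.2.IsPath) ∧
  P.Pairwise (fun p q => ∀ e, e ∈ p.2.2.edges → e ∉ q.2.2.edges) ∧
  ∀ e, e ∈ G.edgeSet ↔ ∃ p ∈ P, e ∈ p.2.2.edges

namespace GallaiAux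

variable {V : Type*}

/-- Build a walk in `⊤` from a vertex function. -/
def wkFun (g : ℕ → V) : (N : ℕ) → (∀ m < N, g m ≠ g (m+1)) → (⊤ : SimpleGraph V).Walk (g 0) (g N)
  | 0, _ => SimpleGraph.Walk.nil
  | N+1, h => (wkFun g N (fun m hm => h m (Nat.lt_succ_of_lt hm))).concat
      (by simpa using h N (Nat.lt_succ_self N))

lemma wkFun_support (g : ℕ → V) : ∀ (N : ℕ) (h : ∀ m < N, g m ≠ g (m+1)),
    (wkFun g N h).support = (List.range (N+1)).map g := by
  intro N
  induction N with
  | zero => intro h; simp [wkFun, List.range_succ]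
  | succ N ih => intro h; simp [wkFun, ih, List.range_succ]

lemma wkFun_edges (g : ℕ → V) : ∀ (N : ℕ) (h : ∀ m < N, g m ≠ g (m+1)),
    (wkFun g N h).edges = (List.range N).map (fun j => s(g j, g (j+1))) := by
  intro N
  induction N with
  | zero => intro h; simp [wkFun]
  | succ N ih => intro h; simp [wkFun, ih, List.range_succ]

def vtx {n : ℕ} (hn : 0 < n) (a : ℕ) : Fin n := ⟨a % n, Nat.mod_lt a hn⟩

lemma vtx_inj {n : ℕ} (hn : 0 < n) {a b : ℕ} (ha : a < n) (hb : b < n)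
    (h : vtx hn a = vtx hn b) : a = b := by
  simpa [vtx, Nat.mod_eq_of_lt ha, Nat.mod_eq_of_lt hb] using h

lemma sym2_vtx {n : ℕ} (hn : 0 < n) {a b c d : ℕ} (ha : a < n) (hb : b < n)
    (hc : c < n) (hd : d < n)
    (h : s(vtx hn a, vtx hn b) = s(vtx hn c, vtx hn d)) :
    (a = c ∧ b = d) ∨ (a = d ∧ b = c) := by
  rw [Sym2.eq_iff] at h
  rcases h with ⟨h1, h2⟩ | ⟨h1, h2⟩
  · exact Or.inl ⟨vtx_inj hn ha hc h1, vtx_inj hn hb hd h2⟩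
  · exact Or.inr ⟨vtx_inj hn ha hd h1, vtx_inj hn hb hc h2⟩

/-- The zig-zag function: path `i` of the standard decomposition of `K_{2k}`
visits `A k i 0, A k i 1, …, A k i (2k-1)`. -/
def A (k i j : ℕ) : ℕ :=
  if j % 2 = 0 then i + j/2 else if j/2 < i then i - j/2 - 1 else i + (2*k - 1 - j/2)

lemma A_lt {k i : ℕ} (hik : i < k) {j : ℕ} (hj : j < 2*k) : A k i j < 2*k := by
  unfold A; split_ifs <;> omega

lemma A_inj {k i : ℕ} (hik : i < k) {j1 j2 : ℕ} (hj1 : j1 < 2*k) (hj2 : j2 < 2*k)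
    (h : A k i j1 = A k i j2) : j1 = j2 := by
  unfold A at h; split_ifs at h <;> omega

lemma A_zero (k i : ℕ) : A k i 0 = i := by simp [A]

lemma A_last {k i : ℕ} (hk : 0 < k) (hi : i < k) : A k i (2*k-1) = i + k := by
  unfold A; split_ifs <;> omega

set_option maxHeartbeats 1000000 in
lemma A_pair_inj {k i i' j j' : ℕ} (hi : i < k) (hi' : i' < k)
    (hj : j < 2*k - 1) (hj' : j' < 2*k - 1)
    (h : (A k i j = A k i' j' ∧ A k i (j+1) = A k i' (j'+1)) ∨
         (A k i j = A k i' (j'+1) ∧ A k i (j+1) = A k i' j')) :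
    i = i' ∧ j = j' := by
  rcases h with ⟨h1, h2⟩ | ⟨h1, h2⟩ <;>
    (unfold A at h1 h2; split_ifs at h1 h2 <;> omega)

def Q (k i m : ℕ) : ℕ :=
  if m = 0 then i else if m = 1 then 2*k else A k i (2*k+1-m)

lemma Q_eq_A {k i m : ℕ} (hm : 2 ≤ m) : Q k i m = A k i (2*k+1-m) := by
  simp only [Q]; rw [if_neg (by omega), if_neg (by omega)]

lemma Q_zero (k i : ℕ) : Q k i 0 = i := rfl
lemma Q_one (k i : ℕ) : Q k i 1 = 2*k := rfl

lemma Q_two {k i : ℕ} (hk : 0 < k) (hi : i < k) : Q k i 2 = i + k := by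
  rw [Q_eq_A (le_refl 2), show 2*k+1-2 = 2*k-1 by omega, A_last hk hi]

lemma Q_le {k i : ℕ} (hi : i < k) (m : ℕ) : Q k i m ≤ 2*k := by
  unfold Q; split_ifs with h1 h2
  · omega
  · omega
  · exact le_of_lt (A_lt hi (by omega))

lemma Q_inj {k i : ℕ} (hi : i < k) {m1 m2 : ℕ} (hm1 : m1 ≤ 2*k) (hm2 : m2 ≤ 2*k)
    (h : Q k i m1 = Q k i m2) : m1 = m2 := by
  rcases Nat.lt_or_ge m1 2 with h1 | h1 <;> rcases Nat.lt_or_ge m2 2 with h2 | h2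
  · interval_cases m1 <;> interval_cases m2 <;> simp only [Q_zero, Q_one] at h <;> omega
  · rw [Q_eq_A h2] at h
    interval_cases m1
    · rw [Q_zero, ← A_zero k i] at h
      have := A_inj hi (by omega) (by omega) h
      omega
    · rw [Q_one] at h
      have := A_lt hi (show 2*k+1-m2 < 2*k by omega)
      omega
  · rw [Q_eq_A h1] at h
    interval_cases m2
    · rw [Q_zero, ← A_zero k i] at h
      have := A_inj hi (by omega) (by omega) h.symm
      omega
    · rw [Q_one] at h
      have := A_lt hi (show 2*k+1-m1 < 2*k by omega)
      omega
  · rw [Q_eq_A h1, Q_eq_A h2] at h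
    have := A_inj hi (show 2*k+1-m1 < 2*k by omega) (show 2*k+1-m2 < 2*k by omega) h
    omega

lemma Q_pair_inj {k i i' m m' : ℕ} (hk : 0 < k) (hi : i < k) (hi' : i' < k)
    (hm : m < 2*k) (hm' : m' < 2*k)
    (h : (Q k i m = Q k i' m' ∧ Q k i (m+1) = Q k i' (m'+1)) ∨
         (Q k i m = Q k i' (m'+1) ∧ Q k i (m+1) = Q k i' m')) :
    i = i' ∧ m = m' := by
  rcases Nat.lt_or_ge m 2 with h1 | h1 <;> rcases Nat.lt_or_ge m' 2 with h2 | h2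
  · -- both small
    interval_cases m <;> interval_cases m' <;>
      simp only [Nat.zero_add, Nat.reduceAdd, Q_zero, Q_one, Q_two hk hi, Q_two hk hi'] at h <;>
      omega
  · -- m small, m' ≥ 2
    have c1 : A k i' (2*k+1-m') < 2*k := A_lt hi' (by omega)
    have c2 : A k i' (2*k+1-(m'+1)) < 2*k := A_lt hi' (by omega)
    rw [Q_eq_A h2, Q_eq_A (show 2 ≤ m'+1 by omega)] at h
    interval_cases m <;>
      simp only [Nat.zero_add, Nat.reduceAdd, Q_zero, Q_one, Q_two hk hi] at h
    · -- m = 0 : components i and 2*k ; 2*k must equal an A value < 2k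
      omega
    · omega
  · -- m ≥ 2, m' small
    have c1 : A k i (2*k+1-m) < 2*k := A_lt hi (by omega)
    have c2 : A k i (2*k+1-(m+1)) < 2*k := A_lt hi (by omega)
    rw [Q_eq_A h1, Q_eq_A (show 2 ≤ m+1 by omega)] at h
    interval_cases m' <;>
      simp only [Nat.zero_add, Nat.reduceAdd, Q_zero, Q_one, Q_two hk hi'] at h
    · omega
    · omega
  · -- both ≥ 2
    rw [Q_eq_A h1, Q_eq_A (show 2 ≤ m+1 by omega), Q_eq_A h2,
      Q_eq_A (show 2 ≤ m'+1 by omega)] at h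
    rw [show 2*k+1-m = (2*k-m)+1 by omega, show 2*k+1-(m+1) = 2*k-m by omega,
      show 2*k+1-m' = (2*k-m')+1 by omega, show 2*k+1-(m'+1) = 2*k-m' by omega] at h
    have := A_pair_inj hi hi' (show 2*k-m < 2*k-1 by omega) (show 2*k-m' < 2*k-1 by omega)
      (by tauto)
    omega

def Rf (k m : ℕ) : ℕ := if m = 0 then 2*k-1 else m-1

lemma Rf_lt {k m : ℕ} (hk : 0 < k) (hm : m ≤ k) : Rf k m < 2*k := by
  unfold Rf; split_ifs <;> omega

lemma Rf_inj {k : ℕ} (hk : 0 < k) {m1 m2 : ℕ} (hm1 : m1 ≤ k) (hm2 : m2 ≤ k)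
    (h : Rf k m1 = Rf k m2) : m1 = m2 := by
  unfold Rf at h; split_ifs at h <;> omega

lemma Rf_pair_one {k m : ℕ} (hk : 0 < k) (hm : m < k) : Rf k m = A k m 1 := by
  unfold Rf A; split_ifs <;> first | contradiction | omega

lemma Rf_pair_zero {k m : ℕ} (hk : 0 < k) (hm : m < k) : Rf k (m+1) = A k m 0 := by
  unfold Rf A; split_ifs <;> first | contradiction | omega

lemma QR_disj {k i m m' : ℕ} (hk : 0 < k) (hi : i < k) (hm : m < 2*k) (hm' : m' < k)
    (h : (Q k i m = Rf k m' ∧ Q k i (m+1) = Rf k (m'+1)) ∨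
         (Q k i m = Rf k (m'+1) ∧ Q k i (m+1) = Rf k m')) : False := by
  rw [Rf_pair_one hk hm', Rf_pair_zero hk hm'] at h
  have d1 : A k m' 1 < 2*k := A_lt hm' (by omega)
  have d2 : A k m' 0 < 2*k := A_lt hm' (by omega)
  rcases Nat.lt_or_ge m 2 with h1 | h1
  · interval_cases m <;>
      simp only [Nat.zero_add, Nat.reduceAdd, Q_zero, Q_one, Q_two hk hi] at h <;> omega
  · rw [Q_eq_A h1, Q_eq_A (show 2 ≤ m+1 by omega)] at h
    rw [show 2*k+1-m = (2*k-m)+1 by omega, show 2*k+1-(m+1) = 2*k-m by omega] at h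
    rcases h with ⟨ha, hb⟩ | ⟨ha, hb⟩
    · have := A_pair_inj hi hm' (show 2*k-m < 2*k-1 by omega) (show 0 < 2*k-1 by omega)
        (Or.inl ⟨hb, ha⟩)
      omega
    · have := A_pair_inj hi hm' (show 2*k-m < 2*k-1 by omega) (show 0 < 2*k-1 by omega)
        (Or.inr ⟨hb, ha⟩)
      omega


lemma decomp_of_counting {n : ℕ} (P : List (Σ u v : Fin n, (⊤ : SimpleGraph (Fin n)).Walk u v))
    (hpath : ∀ p ∈ P, p.2.2.IsPath)
    (hpw : P.Pairwise (fun p q => ∀ e, e ∈ p.2.2.edges → e ∉ q.2.2.edges))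
    (hlen : ((P.map (fun p => p.2.2.edges.length)).sum = n.choose 2)) :
    IsPathDecomp ⊤ P := by
  classical
  refine ⟨hpath, hpw, ?_⟩
  set L : List (Sym2 (Fin n)) := (P.map (fun p => p.2.2.edges)).flatten with hL
  have hnodup : L.Nodup := by
    rw [hL, List.nodup_flatten]
    constructor
    · intro l hl
      obtain ⟨p, hp, rfl⟩ := List.mem_map.mp hl
      exact ((hpath p hp).isTrail).edges_nodup
    · rw [List.pairwise_map]
      exact hpw.imp (by intro p q h e he; exact h e he)
  have hsub : L.toFinset ⊆ (⊤ : SimpleGraph (Fin n)).edgeFinset := by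
    intro e he
    rw [List.mem_toFinset, hL, List.mem_flatten] at he
    obtain ⟨l, hl, hel⟩ := he
    obtain ⟨p, hp, rfl⟩ := List.mem_map.mp hl
    exact mem_edgeFinset.mpr (p.2.2.edges_subset_edgeSet hel)
  have hcard : ((⊤ : SimpleGraph (Fin n)).edgeFinset).card ≤ L.toFinset.card := by
    rw [List.toFinset_card_of_nodup hnodup, hL, List.length_flatten,
      card_edgeFinset_top_eq_card_choose_two, Fintype.card_fin]
    rw [List.map_map] at *
    exact le_of_eq hlen.symm
  have heq := Finset.eq_of_subset_of_card_le hsub hcard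
  intro e
  constructor
  · intro he
    have : e ∈ L.toFinset := by rw [heq]; exact mem_edgeFinset.mpr he
    rw [List.mem_toFinset, hL, List.mem_flatten] at this
    obtain ⟨l, hl, hel⟩ := this
    obtain ⟨p, hp, rfl⟩ := List.mem_map.mp hl
    exact ⟨p, hp, hel⟩
  · rintro ⟨p, hp, he⟩
    exact p.2.2.edges_subset_edgeSet he

theorem even_case (n k : ℕ) (hk : 0 < k) (hnk : n = 2*k) :
    ∃ P : List (Σ u v : Fin n, (⊤ : SimpleGraph (Fin n)).Walk u v),
      IsPathDecomp ⊤ P ∧ P.length ≤ (n + 1) / 2 := by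
  subst hnk
  have hn : 0 < 2*k := by omega
  set g : ℕ → ℕ → Fin (2*k) := fun i j => vtx hn (A k (min i (k-1)) j) with hg
  have hmin : ∀ i : ℕ, min i (k-1) < k := fun i => by omega
  have hAlt : ∀ i : ℕ, ∀ j < 2*k, A k (min i (k-1)) j < 2*k :=
    fun i j hj => A_lt (hmin i) hj
  have hgadj : ∀ i : ℕ, ∀ m < 2*k - 1, g i m ≠ g i (m+1) := by
    intro i m hm hcon
    have h1 := vtx_inj hn (hAlt i m (by omega)) (hAlt i (m+1) (by omega)) hcon
    have h2 := A_inj (hmin i) (show m < 2*k by omega) (by omega) h1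
    omega
  set P : List (Σ u v : Fin (2*k), (⊤ : SimpleGraph (Fin (2*k))).Walk u v) :=
    (List.range k).map (fun i => ⟨g i 0, g i (2*k-1), wkFun (g i) (2*k-1) (hgadj i)⟩) with hP
  have hpath : ∀ p ∈ P, p.2.2.IsPath := by
    intro p hp
    rw [hP, List.mem_map] at hp
    obtain ⟨i, hi, rfl⟩ := hp
    rw [SimpleGraph.Walk.isPath_def, wkFun_support]
    refine List.Nodup.map_on ?_ List.nodup_range
    intro j1 h1 j2 h2 heq
    rw [List.mem_range] at h1 h2
    exact A_inj (hmin i) (by omega) (by omega)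
      (vtx_inj hn (hAlt i j1 (by omega)) (hAlt i j2 (by omega)) heq)
  have hpw : P.Pairwise (fun p q => ∀ e, e ∈ p.2.2.edges → e ∉ q.2.2.edges) := by
    rw [hP, List.pairwise_map]
    refine (List.pairwise_lt_range : List.Pairwise (· < ·) (List.range k)).imp_of_mem ?_
    intro i i' hi hi' hlt e he he'
    rw [List.mem_range] at hi hi'
    rw [wkFun_edges, List.mem_map] at he he'
    obtain ⟨a, ha, rfl⟩ := he
    obtain ⟨b, hb, heq⟩ := he'
    rw [List.mem_range] at ha hb
    have := sym2_vtx hn (hAlt i' b (by omega)) (hAlt i' (b+1) (by omega))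
      (hAlt i a (by omega)) (hAlt i (a+1) (by omega)) heq
    have := A_pair_inj (hmin i') (hmin i) (by omega) (by omega) this
    omega
  have hlen : (P.map (fun p => p.2.2.edges.length)).sum = (2*k).choose 2 := by
    rw [hP, List.map_map]
    have he : ∀ i : ℕ, (wkFun (g i) (2*k-1) (hgadj i)).edges.length = 2*k-1 := by
      intro i; rw [wkFun_edges]; simp
    rw [List.map_congr_left (fun i (_ : i ∈ List.range k) => by
      simpa using he i)]
    simp only [List.map_const', List.length_range, List.sum_replicate, smul_eq_mul]
    rw [Nat.choose_two_right]
    have h2 : 2*k*(2*k-1) = 2*(k*(2*k-1)) := by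
      rw [mul_assoc]
    rw [h2, Nat.mul_div_cancel_left _ (by norm_num : 0 < 2)]
  refine ⟨P, decomp_of_counting P hpath hpw hlen, ?_⟩
  rw [hP, List.length_map, List.length_range]
  omega

theorem odd_case (n k : ℕ) (hk : 0 < k) (hnk : n = 2*k+1) :
    ∃ P : List (Σ u v : Fin n, (⊤ : SimpleGraph (Fin n)).Walk u v),
      IsPathDecomp ⊤ P ∧ P.length ≤ (n + 1) / 2 := by
  subst hnk
  have hn : 0 < 2*k+1 := by omega
  have hmin : ∀ i : ℕ, min i (k-1) < k := fun i => by omega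
  set qv : ℕ → ℕ → Fin (2*k+1) := fun i m => vtx hn (Q k (min i (k-1)) m) with hqv
  set rv : ℕ → Fin (2*k+1) := fun m => vtx hn (Rf k m) with hrv
  have hQle : ∀ (i m : ℕ), Q k (min i (k-1)) m < 2*k+1 :=
    fun i m => by have := Q_le (hmin i) m; omega
  have hRlt : ∀ m : ℕ, m ≤ k → Rf k m < 2*k+1 := fun m hm => by have := Rf_lt hk hm; omega
  have hqadj : ∀ i : ℕ, ∀ m < 2*k, qv i m ≠ qv i (m+1) := by
    intro i m hm hcon
    have h1 := vtx_inj hn (hQle i m) (hQle i (m+1)) hcon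
    have h2 := Q_inj (hmin i) (show m ≤ 2*k by omega) (by omega) h1
    omega
  have hradj : ∀ m < k, rv m ≠ rv (m+1) := by
    intro m hm hcon
    have h1 := vtx_inj hn (hRlt m (by omega)) (hRlt (m+1) (by omega)) hcon
    have h2 := Rf_inj hk (show m ≤ k by omega) (by omega) h1
    omega
  set Rsig : (Σ u v : Fin (2*k+1), (⊤ : SimpleGraph (Fin (2*k+1))).Walk u v) :=
    ⟨rv 0, rv k, wkFun rv k hradj⟩ with hRsig
  set P : List (Σ u v : Fin (2*k+1), (⊤ : SimpleGraph (Fin (2*k+1))).Walk u v) :=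
    ((List.range k).map (fun i => ⟨qv i 0, qv i (2*k), wkFun (qv i) (2*k) (hqadj i)⟩))
      ++ [Rsig] with hP
  have hpath : ∀ p ∈ P, p.2.2.IsPath := by
    intro p hp
    rw [hP, List.mem_append] at hp
    rcases hp with hp | hp
    · rw [List.mem_map] at hp
      obtain ⟨i, hi, rfl⟩ := hp
      rw [SimpleGraph.Walk.isPath_def, wkFun_support]
      refine List.Nodup.map_on ?_ List.nodup_range
      intro j1 h1 j2 h2 heq
      rw [List.mem_range] at h1 h2
      exact Q_inj (hmin i) (by omega) (by omega)
        (vtx_inj hn (hQle i j1) (hQle i j2) heq)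
    · rw [List.mem_singleton] at hp
      subst hp
      rw [hRsig]
      rw [SimpleGraph.Walk.isPath_def, wkFun_support]
      refine List.Nodup.map_on ?_ List.nodup_range
      intro j1 h1 j2 h2 heq
      rw [List.mem_range] at h1 h2
      exact Rf_inj hk (by omega) (by omega)
        (vtx_inj hn (hRlt j1 (by omega)) (hRlt j2 (by omega)) heq)
  have hpw : P.Pairwise (fun p q => ∀ e, e ∈ p.2.2.edges → e ∉ q.2.2.edges) := by
    rw [hP, List.pairwise_append]
    refine ⟨?_, List.pairwise_singleton _ _, ?_⟩
    · rw [List.pairwise_map]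
      refine (List.pairwise_lt_range : List.Pairwise (· < ·) (List.range k)).imp_of_mem ?_
      intro i i' hi hi' hlt e he he'
      rw [List.mem_range] at hi hi'
      rw [wkFun_edges, List.mem_map] at he he'
      obtain ⟨a, ha, rfl⟩ := he
      obtain ⟨b, hb, heq⟩ := he'
      rw [List.mem_range] at ha hb
      have hs := sym2_vtx hn (hQle i' b) (hQle i' (b+1)) (hQle i a) (hQle i (a+1)) heq
      have := Q_pair_inj hk (hmin i') (hmin i) hb ha hs
      omega
    · intro p hp q hq e he he'
      rw [List.mem_map] at hp
      obtain ⟨i, hi, rfl⟩ := hp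
      rw [List.mem_range] at hi
      rw [List.mem_singleton] at hq
      subst hq
      rw [hRsig] at he'
      rw [wkFun_edges, List.mem_map] at he he'
      obtain ⟨a, ha, rfl⟩ := he
      obtain ⟨b, hb, heq⟩ := he'
      rw [List.mem_range] at ha hb
      have hs := sym2_vtx hn (hRlt b (by omega)) (hRlt (b+1) (by omega))
        (hQle i a) (hQle i (a+1)) heq
      rcases hs with ⟨x, y⟩ | ⟨x, y⟩
      · exact QR_disj hk (hmin i) ha hb (Or.inl ⟨x.symm, y.symm⟩)
      · exact QR_disj hk (hmin i) ha hb (Or.inr ⟨y.symm, x.symm⟩)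
  have hlen : (P.map (fun p => p.2.2.edges.length)).sum = (2*k+1).choose 2 := by
    rw [hP, List.map_append, List.sum_append, List.map_map]
    have he : ∀ i : ℕ, (wkFun (qv i) (2*k) (hqadj i)).edges.length = 2*k := by
      intro i; rw [wkFun_edges]; simp
    rw [List.map_congr_left (fun i (_ : i ∈ List.range k) => by
      simpa using he i)]
    have hre : (wkFun rv k hradj).edges.length = k := by
      rw [wkFun_edges]; simp
    simp only [List.map_const', List.length_range, List.sum_replicate, smul_eq_mul,
      List.map_cons, List.map_nil, List.sum_cons, List.sum_nil, hRsig]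
    rw [hre, Nat.choose_two_right]
    have h2 : (2*k+1)*(2*k+1-1) = 2*(k*(2*k) + k) := by
      rw [show 2*k+1-1 = 2*k by omega]; ring
    rw [h2, Nat.mul_div_cancel_left _ (by norm_num : 0 < 2)]
    omega
  refine ⟨P, decomp_of_counting P hpath hpw hlen, ?_⟩
  rw [hP, List.length_append, List.length_map, List.length_range]
  simp only [List.length_singleton]
  omega

end GallaiAux

/-- Gallai's conjecture holds for all complete graphs. -/
theorem gallai_complete (n : ℕ) (hn : 1 ≤ n) :
    ∃ P : List (Σ u v : Fin n, (⊤ : SimpleGraph (Fin n)).Walk u v),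
      IsPathDecomp ⊤ P ∧ P.length ≤ (n + 1) / 2 := by
  rcases Nat.even_or_odd n with he | ho
  · obtain ⟨k, hk⟩ := he
    exact GallaiAux.even_case n k (by omega) (by omega)
  · obtain ⟨k, hk⟩ := ho
    rcases Nat.eq_zero_or_pos k with rfl | hkpos
    · -- n = 1
      have hn1 : n = 1 := by omega
      subst hn1
      refine ⟨[], ⟨by simp, by simp, ?_⟩, by simp⟩
      intro e
      simp only [List.not_mem_nil, false_and, exists_false, iff_false]
      intro hmem
      induction e using Sym2.ind with
      | _ a b =>
        rw [SimpleGraph.mem_edgeSet, SimpleGraph.top_adj] at hmem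
        exact hmem (Subsingleton.elim a b)
    · exact GallaiAux.odd_case n k hkpos (by omega)
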